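/- Let x, y ∈ ℂ^d be linearly independent, and suppose z z* - w w* = λ x x* - μ y y* for some z, w ∈ ℂ^d and real numbers λ, μ ≥ 0 not both zero. Then z and w both lie in the linear span of {x, y}. -/

import Mathlib

open Matrix

theorem stmt_3 (d : ℕ) (x y z w : Fin d → ℂ) (lam mu : ℝ)
    (hxy : LinearIndependent ℂ ![x, y])
    (hlam : 0 ≤ lam) (hmu : 0 ≤ mu) (hne : ¬(lam = 0 ∧ mu = 0))
    (heq : vecMulVec z (star z) - vecMulVec w (star w)
        = (lam : ℂ) • vecMulVec x (star x) - (mu : ℂ) • vecMulVec y (star y)) :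
    z ∈ Submodule.span ℂ ({x, y} : Set (Fin d → ℂ)) ∧
    w ∈ Submodule.span ℂ ({x, y} : Set (Fin d → ℂ)) := by
  classical
  set conj : ℂ →+* ℂ := starRingEnd ℂ with hconjdef
  -- entrywise equation
  have E : ∀ i j, z i * conj (z j) - w i * conj (w j)
      = (lam : ℂ) * (x i * conj (x j)) - (mu : ℂ) * (y i * conj (y j)) := by
    intro i j
    have h := congrFun (congrFun heq i) j
    simp only [Matrix.sub_apply, Matrix.smul_apply, Matrix.vecMulVec_apply, Pi.star_apply,
      smul_eq_mul] at h
    simpa [hconjdef, mul_assoc] using h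
  set s : (Fin d → ℂ) → (Fin d → ℂ) → ℂ := fun a u => ∑ j, conj (a j) * u j with hs
  have hconj : ∀ a b : Fin d → ℂ, conj (s a b) = s b a := by
    intro a b
    simp [hs, map_sum, mul_comm]
  -- the vector identity applied to u
  have hvec : ∀ u : Fin d → ℂ, ∀ i,
      z i * s z u - w i * s w u = (lam : ℂ) * (x i * s x u) - (mu : ℂ) * (y i * s y u) := by
    intro u i
    have h : ∑ j, (z i * conj (z j) - w i * conj (w j)) * u j
        = ∑ j, ((lam : ℂ) * (x i * conj (x j)) - (mu : ℂ) * (y i * conj (y j))) * u j :=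
      Finset.sum_congr rfl fun j _ => by rw [E i j]
    calc z i * s z u - w i * s w u
        = ∑ j, (z i * conj (z j) - w i * conj (w j)) * u j := by
          simp only [hs, Finset.mul_sum, ← Finset.sum_sub_distrib]
          exact Finset.sum_congr rfl fun j _ => by ring
      _ = ∑ j, ((lam : ℂ) * (x i * conj (x j)) - (mu : ℂ) * (y i * conj (y j))) * u j := h
      _ = (lam : ℂ) * (x i * s x u) - (mu : ℂ) * (y i * s y u) := by
          simp only [hs, Finset.mul_sum, ← Finset.sum_sub_distrib]
          exact Finset.sum_congr rfl fun j _ => by ring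
  -- key claim: for u orthogonal to x and y, s z u = 0 and s w u = 0
  have key : ∀ u : Fin d → ℂ, s x u = 0 → s y u = 0 → s z u = 0 ∧ s w u = 0 := by
    intro u hxu hyu
    have h1 : ∀ i, z i * s z u = w i * s w u := by
      intro i
      have h := hvec u i
      rw [hxu, hyu] at h
      simp only [mul_zero, sub_zero, zero_sub] at h
      linear_combination h
    have h2 : conj (s z u) * s z u = conj (s w u) * s w u := by
      have e1 : conj (s z u) * s z u = ∑ i, conj (u i) * (z i * s z u) := by
        rw [hconj z u]
        simp only [hs, Finset.sum_mul]
        exact Finset.sum_congr rfl fun i _ => by ring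
      have e2 : conj (s w u) * s w u = ∑ i, conj (u i) * (w i * s w u) := by
        rw [hconj w u]
        simp only [hs, Finset.sum_mul]
        exact Finset.sum_congr rfl fun i _ => by ring
      rw [e1, e2]
      exact Finset.sum_congr rfl fun i _ => by rw [h1 i]
    by_cases hszu : s z u = 0
    · refine ⟨hszu, ?_⟩
      rw [hszu] at h2
      simpa [mul_eq_zero, map_eq_zero, hconjdef] using h2.symm
    · exfalso
      have hswu : s w u ≠ 0 := by
        intro h0
        rw [h0] at h2
        simp only [mul_zero] at h2
        exact hszu (by simpa [mul_eq_zero, map_eq_zero, hconjdef] using h2)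
      -- then w w* = z z*
      have hzw : ∀ i j, w i * conj (w j) = z i * conj (z j) := by
        intro i j
        have hne0 : s w u * conj (s w u) ≠ 0 :=
          mul_ne_zero hswu (by simpa [map_eq_zero, hconjdef] using hswu)
        have c1 := h1 i
        have c2 : conj (z j) * conj (s z u) = conj (w j) * conj (s w u) := by
          have := congrArg conj (h1 j)
          simpa [_root_.map_mul] using this
        have keyeq : (w i * conj (w j)) * (s w u * conj (s w u))
            = (z i * conj (z j)) * (s w u * conj (s w u)) := by
          calc (w i * conj (w j)) * (s w u * conj (s w u))
              = (w i * s w u) * (conj (w j) * conj (s w u)) := by ring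
            _ = (z i * s z u) * (conj (z j) * conj (s z u)) := by rw [← c1, ← c2]
            _ = (z i * conj (z j)) * (conj (s z u) * s z u) := by ring
            _ = (z i * conj (z j)) * (conj (s w u) * s w u) := by rw [h2]
            _ = (z i * conj (z j)) * (s w u * conj (s w u)) := by ring
        exact mul_right_cancel₀ hne0 keyeq
      have hE0 : ∀ i j, (lam : ℂ) * (x i * conj (x j)) = (mu : ℂ) * (y i * conj (y j)) := by
        intro i j
        have := E i j
        rw [hzw i j] at this
        linear_combination -this
      have hx0 : x ≠ 0 := by
        have := hxy.ne_zero 0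
        simpa using this
      have hy0 : y ≠ 0 := by
        have := hxy.ne_zero 1
        simpa using this
      by_cases hl : lam = 0
      · have hm : mu ≠ 0 := fun h => hne ⟨hl, h⟩
        obtain ⟨k, hk⟩ := Function.ne_iff.mp hy0
        have := hE0 k k
        rw [hl] at this
        simp only [Complex.ofReal_zero, zero_mul] at this
        have : (mu : ℂ) * (y k * conj (y k)) = 0 := this.symm
        rcases mul_eq_zero.mp this with h | h
        · exact hm (by exact_mod_cast h)
        · rcases mul_eq_zero.mp h with h' | h'
          · exact hk (by simpa using h')
          · exact hk (by simpa [map_eq_zero, hconjdef] using h')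
      · obtain ⟨k, hk⟩ := Function.ne_iff.mp hx0
        have hk' : x k ≠ 0 := by simpa using hk
        have hlc : (lam : ℂ) ≠ 0 := by exact_mod_cast hl
        set a : ℂ := (mu : ℂ) * conj (y k) / ((lam : ℂ) * conj (x k)) with ha
        have hxay : a • y = x := by
          funext i
          have h := hE0 i k
          have hck : conj (x k) ≠ 0 := by simpa [map_eq_zero, hconjdef] using hk'
          show a * y i = x i
          rw [ha]
          field_simp
          linear_combination -h
        exact (linearIndependent_fin2.mp hxy).2 a (by simpa using hxay)
  -- now use orthogonal complements in EuclideanSpace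
  let K : Submodule ℂ (EuclideanSpace ℂ (Fin d)) :=
    Submodule.span ℂ ({WithLp.toLp 2 x, WithLp.toLp 2 y} : Set (EuclideanSpace ℂ (Fin d)))
  have hmem : ∀ v : EuclideanSpace ℂ (Fin d),
      (∀ u : EuclideanSpace ℂ (Fin d), s x u = 0 → s y u = 0 → s v u = 0) →
      v ∈ K := by
    intro v hv
    rw [← Submodule.orthogonal_orthogonal K, Submodule.mem_orthogonal]
    intro u hu
    have hu' := (Submodule.mem_orthogonal K u).mp hu
    have hxu : s x u = 0 := by
      have := hu' (WithLp.toLp 2 x) (Submodule.subset_span (by simp))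
      simpa [PiLp.inner_apply, hs, hconjdef, RCLike.inner_apply, mul_comm] using this
    have hyu : s y u = 0 := by
      have := hu' (WithLp.toLp 2 y) (Submodule.subset_span (by simp))
      simpa [PiLp.inner_apply, hs, hconjdef, RCLike.inner_apply, mul_comm] using this
    have hvu : s v u = 0 := hv u hxu hyu
    have huv : s u v = 0 := by
      rw [← hconj v u, hvu, map_zero]
    show (inner ℂ u v : ℂ) = 0
    simpa [PiLp.inner_apply, hs, hconjdef, RCLike.inner_apply, mul_comm] using huv
  have hzK : (WithLp.toLp 2 z : EuclideanSpace ℂ (Fin d)) ∈ K :=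
    hmem _ fun u hxu hyu => (key u hxu hyu).1
  have hwK : (WithLp.toLp 2 w : EuclideanSpace ℂ (Fin d)) ∈ K :=
    hmem _ fun u hxu hyu => (key u hxu hyu).2
  obtain ⟨a1, b1, hz'⟩ := Submodule.mem_span_pair.mp hzK
  obtain ⟨a2, b2, hw'⟩ := Submodule.mem_span_pair.mp hwK
  constructor
  · exact Submodule.mem_span_pair.mpr ⟨a1, b1, by simpa using congrArg WithLp.ofLp hz'⟩
  · exact Submodule.mem_span_pair.mpr ⟨a2, b2, by simpa using congrArg WithLp.ofLp hw'⟩
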